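/- Let f : [0,∞) → [0,∞) be amenable. Then f is (P)-preserving (i.e., for every semimetric space (X,d) satisfying the K-relaxed polygonal inequality for some K ≥ 1, the function f∘d is a semimetric and (X, f∘d) satisfies the K′-relaxed polygonal inequality for some K′ ≥ 1) if and only if for every K₁ ≥ 1 there exists K₂ ≥ 1 such that for every n ∈ ℕ and all a₁, …, aₙ ∈ [0,∞) with (1+K₁)·max{a_i : i ≤ n} ≤ K₁·∑_{i=1}^{n} a_i, one has (1+K₂)·max{f(a_i) : i ≤ n} ≤ K₂·∑_{i=1}^{n} f(a_i); equivalently, f maps every K₁-relaxed polygon to a K₂-relaxed polygon (up to rearrangement). -/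

import Mathlib

/-- A semimetric on a set `X`: nonnegative, vanishing exactly on the diagonal, symmetric. -/
def IsSemimetricOn {α : Type} (X : Set α) (d : α → α → ℝ) : Prop :=
  (∀ x ∈ X, ∀ y ∈ X, 0 ≤ d x y) ∧
  (∀ x ∈ X, ∀ y ∈ X, (d x y = 0 ↔ x = y)) ∧
  (∀ x ∈ X, ∀ y ∈ X, d x y = d y x)

/-- A strong b-metric on `X` with relaxation constant `K`. -/
def IsStrongBMetricOn {α : Type} (X : Set α) (d : α → α → ℝ) (K : ℝ) : Prop :=
  IsSemimetricOn X d ∧ 1 ≤ K ∧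
    ∀ x ∈ X, ∀ y ∈ X, ∀ z ∈ X, d x z ≤ K * d x y + d y z

/-- A b-metric on `X` with relaxation constant `K`. -/
def IsBMetricOn {α : Type} (X : Set α) (d : α → α → ℝ) (K : ℝ) : Prop :=
  IsSemimetricOn X d ∧ 1 ≤ K ∧
    ∀ x ∈ X, ∀ y ∈ X, ∀ z ∈ X, d x z ≤ K * (d x y + d y z)

/-- A metric on `X`. -/
def IsMetricOn {α : Type} (X : Set α) (d : α → α → ℝ) : Prop :=
  IsSemimetricOn X d ∧
    ∀ x ∈ X, ∀ y ∈ X, ∀ z ∈ X, d x z ≤ d x y + d y z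

/-- The set of distances realized on `X`; its `sSup` is the diameter. -/
def distSet {α : Type} (X : Set α) (d : α → α → ℝ) : Set ℝ :=
  {r : ℝ | ∃ x ∈ X, ∃ y ∈ X, d x y = r}

/-- `(X, d)` satisfies the `K`-relaxed polygonal inequality. -/
def SatisfiesRPI {α : Type} (X : Set α) (d : α → α → ℝ) (K : ℝ) : Prop :=
  ∀ n : ℕ, ∀ x : ℕ → α, (∀ i ≤ n, x i ∈ X) →
    d (x 0) (x n) ≤ K * ∑ i ∈ Finset.range n, d (x i) (x (i + 1))

/-- `(a,b,c)` with `a ≥ b ≥ c ≥ 0` is a `K`-triangle triplet: `a ≤ K (b + c)`. -/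
def IsTriangleTriplet (K a b c : ℝ) : Prop :=
  b ≤ a ∧ c ≤ b ∧ 0 ≤ c ∧ a ≤ K * (b + c)

/-- `(a,b,c)` with `a ≥ b ≥ c ≥ 0` is a strong `K`-triangle triplet: `a ≤ K c + b`. -/
def IsStrongTriangleTriplet (K a b c : ℝ) : Prop :=
  b ≤ a ∧ c ≤ b ∧ 0 ≤ c ∧ a ≤ K * c + b

/-- The values `x, y, z` can be arranged into a `K`-triangle triplet. -/
def FormsTriangleTriplet (K x y z : ℝ) : Prop :=
  ∃ a b c : ℝ, ({a, b, c} : Multiset ℝ) = ({x, y, z} : Multiset ℝ) ∧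
    IsTriangleTriplet K a b c

/-- The values `x, y, z` can be arranged into a strong `K`-triangle triplet. -/
def FormsStrongTriangleTriplet (K x y z : ℝ) : Prop :=
  ∃ a b c : ℝ, ({a, b, c} : Multiset ℝ) = ({x, y, z} : Multiset ℝ) ∧
    IsStrongTriangleTriplet K a b c


private lemma circ_upper (p x : ℝ) : ‖(x : AddCircle p)‖ ≤ |x| := by
  simpa using QuotientAddGroup.norm_mk_le_norm (S := AddSubgroup.zmultiples p) (m := x)

private lemma circ_lower_abs {p x : ℝ} (h : |x| ≤ p) :
    min |x| (p - |x|) ≤ ‖(x : AddCircle p)‖ := by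
  rw [AddCircle.norm_eq]
  set k := round (p⁻¹ * x) with hk
  have hp : 0 ≤ p := le_trans (abs_nonneg x) h
  rcases le_or_gt x 0 with hx | hx
  · -- x ≤ 0, |x| = -x
    have habs : |x| = -x := abs_of_nonpos hx
    rcases le_or_gt 0 k with hk0 | hk0
    · have : (0:ℝ) ≤ (k:ℝ) * p := mul_nonneg (by exact_mod_cast hk0) hp
      calc min |x| (p - |x|) ≤ |x| := min_le_left _ _
        _ ≤ (k:ℝ)*p - x := by linarith
        _ ≤ |x - k*p| := by rw [abs_sub_comm]; exact le_abs_self _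
    · have hk1 : (k:ℝ) ≤ -1 := by exact_mod_cast Int.le_sub_one_of_lt hk0
      have : (k:ℝ) * p ≤ -p := by nlinarith
      calc min |x| (p - |x|) ≤ p - |x| := min_le_right _ _
        _ ≤ x - (k:ℝ)*p := by linarith
        _ ≤ |x - k*p| := le_abs_self _
  · have habs : |x| = x := abs_of_pos hx
    rcases le_or_gt k 0 with hk0 | hk0
    · have : (k:ℝ) * p ≤ 0 := mul_nonpos_of_nonpos_of_nonneg (by exact_mod_cast hk0) hp
      calc min |x| (p - |x|) ≤ |x| := min_le_left _ _
        _ ≤ x - (k:ℝ)*p := by linarith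
        _ ≤ |x - k*p| := le_abs_self _
    · have hk1 : (1:ℝ) ≤ (k:ℝ) := by exact_mod_cast hk0
      have : p ≤ (k:ℝ)*p := le_mul_of_one_le_left hp hk1
      calc min |x| (p - |x|) ≤ p - |x| := min_le_right _ _
        _ ≤ (k:ℝ)*p - x := by linarith
        _ ≤ |x - k*p| := by rw [abs_sub_comm]; exact le_abs_self _

private lemma circ_sub_period (p x : ℝ) :
    ((p - x : ℝ) : AddCircle p) = ((-x : ℝ) : AddCircle p) := by
  rw [sub_eq_add_neg, AddCircle.coe_add, AddCircle.coe_period, zero_add]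

private lemma circ_neg (p x : ℝ) : ‖((-x : ℝ) : AddCircle p)‖ = ‖(x : AddCircle p)‖ := by
  rw [AddCircle.coe_neg, norm_neg]
private lemma chainBound {α : Type} {ρ : α → α → ℝ}
    (hzero : ∀ x : α, ρ x x = 0)
    (htri : ∀ x y z : α, ρ x z ≤ ρ x y + ρ y z)
    (n : ℕ) (x : ℕ → α) :
    ρ (x 0) (x n) ≤ ∑ i ∈ Finset.range n, ρ (x i) (x (i + 1)) := by
  induction n with
  | zero => simp [hzero]
  | succ n ih =>
    rw [Finset.sum_range_succ]
    have h2 := htri (x 0) (x n) (x (n + 1))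
    linarith

private lemma cyclePath {α : Type} {X : Set α} {D : α → α → ℝ} {K : ℝ}
    (hsym : ∀ x ∈ X, ∀ y ∈ X, D x y = D y x)
    (hrpi : SatisfiesRPI X D K)
    (m : ℕ) (x : ℕ → α) (hx : ∀ i ≤ m, x i ∈ X)
    (j : ℕ) (hj1 : 1 ≤ j) (hjm : j ≤ m) :
    D (x (j - 1)) (x j) ≤
      K * (∑ i ∈ Finset.range (j - 1), D (x i) (x (i + 1)) + D (x 0) (x m)
        + ∑ i ∈ Finset.Ico j m, D (x i) (x (i + 1))) := by
  set r := m - j with hr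
  set y : ℕ → α := fun t => if t ≤ r then x (j + t) else x (t - r - 1) with hy
  have hyX : ∀ i ≤ m, y i ∈ X := by
    intro i hi
    simp only [hy]
    split
    · exact hx _ (by omega)
    · exact hx _ (by omega)
  have h0 : y 0 = x j := by simp [hy]
  have hm : y m = x (j - 1) := by
    simp only [hy]
    rw [if_neg (by omega)]
    congr 1
    omega
  have key := hrpi m y hyX
  rw [h0, hm] at key
  have hsum : ∑ i ∈ Finset.range m, D (y i) (y (i + 1))
      = ∑ i ∈ Finset.range (j - 1), D (x i) (x (i + 1)) + D (x 0) (x m)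
        + ∑ i ∈ Finset.Ico j m, D (x i) (x (i + 1)) := by
    have hsplit : ∑ i ∈ Finset.range m, D (y i) (y (i + 1))
        = ∑ i ∈ Finset.Ico 0 (r + 1), D (y i) (y (i + 1))
          + ∑ i ∈ Finset.Ico (r + 1) m, D (y i) (y (i + 1)) := by
      rw [Finset.sum_Ico_consecutive _ (by omega) (by omega), ← Finset.range_eq_Ico]
    have h1 : ∑ i ∈ Finset.Ico 0 (r + 1), D (y i) (y (i + 1))
        = ∑ i ∈ Finset.range r, D (y i) (y (i + 1)) + D (y r) (y (r + 1)) := by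
      rw [← Finset.range_eq_Ico, Finset.sum_range_succ]
    have hFr : D (y r) (y (r + 1)) = D (x 0) (x m) := by
      have e1 : y r = x m := by
        simp only [hy]; rw [if_pos le_rfl]; congr 1 <;> omega
      have e2 : y (r + 1) = x 0 := by
        simp only [hy]; rw [if_neg (by omega)]; congr 1 <;> omega
      rw [e1, e2, hsym _ (hx m le_rfl) _ (hx 0 (by omega))]
    have h2 : ∑ i ∈ Finset.range r, D (y i) (y (i + 1))
        = ∑ i ∈ Finset.Ico j m, D (x i) (x (i + 1)) := by
      rw [Finset.sum_Ico_eq_sum_range]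
      have : m - j = r := hr.symm
      rw [this]
      refine Finset.sum_congr rfl ?_
      intro i hi
      rw [Finset.mem_range] at hi
      have e1 : y i = x (j + i) := by simp only [hy]; rw [if_pos (by omega)]
      have e2 : y (i + 1) = x (j + i + 1) := by
        simp only [hy]; rw [if_pos (by omega)]; congr 1 <;> omega
      rw [e1, e2]
    have h3 : ∑ i ∈ Finset.Ico (r + 1) m, D (y i) (y (i + 1))
        = ∑ i ∈ Finset.range (j - 1), D (x i) (x (i + 1)) := by
      rw [Finset.sum_Ico_eq_sum_range]
      have : m - (r + 1) = j - 1 := by omega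
      rw [this]
      refine Finset.sum_congr rfl ?_
      intro i hi
      rw [Finset.mem_range] at hi
      have e1 : y (r + 1 + i) = x i := by
        simp only [hy]; rw [if_neg (by omega)]; congr 1 <;> omega
      have e2 : y (r + 1 + i + 1) = x (i + 1) := by
        simp only [hy]; rw [if_neg (by omega)]; congr 1 <;> omega
      rw [e1, e2]
    rw [hsplit, h1, h2, h3, hFr]
    ring
  rw [hsum] at key
  rw [hsym _ (hx (j-1) (by omega)) _ (hx j hjm)]
  exact key
private def PolyPred (K₁ : ℝ) (p : ℕ × (ℕ → ℝ)) : Prop :=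
  3 ≤ p.1 ∧ (∀ i ∈ Finset.Icc 1 p.1, 0 < p.2 i) ∧
    ∀ j ∈ Finset.Icc 1 p.1, (1 + K₁) * p.2 j ≤ K₁ * ∑ i ∈ Finset.Icc 1 p.1, p.2 i

private def PolyT (K₁ : ℝ) : Type := {p : ℕ × (ℕ → ℝ) // PolyPred K₁ p}

section PolyAux

variable {K₁ : ℝ}

private def pn (p : PolyT K₁) : ℕ := p.1.1
private def pa (p : PolyT K₁) : ℕ → ℝ := p.1.2
private noncomputable def pS (p : PolyT K₁) : ℝ := ∑ i ∈ Finset.Icc 1 (pn p), pa p i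
private noncomputable def pg (p : PolyT K₁) (i : ℕ) : ℝ := ∑ k ∈ Finset.Icc 1 i, pa p k

private lemma hn3 (p : PolyT K₁) : 3 ≤ pn p := p.2.1
private lemma hpos (p : PolyT K₁) : ∀ i ∈ Finset.Icc 1 (pn p), 0 < pa p i := p.2.2.1
private lemma hpoly (p : PolyT K₁) :
    ∀ j ∈ Finset.Icc 1 (pn p), (1 + K₁) * pa p j ≤ K₁ * pS p := p.2.2.2

private lemma pS_pos (p : PolyT K₁) : 0 < pS p := by
  refine Finset.sum_pos (fun i hi => hpos p i hi) ?_
  exact ⟨1, by simp [Finset.mem_Icc]; have := hn3 p; omega⟩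

private lemma pa_le_pS (p : PolyT K₁) {i : ℕ} (hi : i ∈ Finset.Icc 1 (pn p)) :
    pa p i ≤ pS p :=
  Finset.single_le_sum (fun j hj => (hpos p j hj).le) hi

private lemma pg_zero (p : PolyT K₁) : pg p 0 = 0 := by simp [pg]

private lemma pg_top (p : PolyT K₁) : pg p (pn p) = pS p := rfl

private lemma pg_sub (p : PolyT K₁) {i : ℕ} (h1 : 1 ≤ i) :
    pg p i = pg p (i - 1) + pa p i := by
  obtain ⟨i', rfl⟩ : ∃ i', i = i' + 1 := ⟨i - 1, by omega⟩
  rw [pg, pg, Finset.sum_Icc_succ_top (by omega)]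
  simp

private lemma pg_mono (p : PolyT K₁) {i j : ℕ} (hij : i ≤ j) (hj : j ≤ pn p) :
    pg p i ≤ pg p j := by
  refine Finset.sum_le_sum_of_subset_of_nonneg (Finset.Icc_subset_Icc_right hij) ?_
  intro k hk _
  exact (hpos p k (Finset.mem_Icc.mpr ⟨(Finset.mem_Icc.mp hk).1, le_trans (Finset.mem_Icc.mp hk).2 hj⟩)).le

private lemma pg_nonneg (p : PolyT K₁) {i : ℕ} (hi : i ≤ pn p) : 0 ≤ pg p i := by
  have := pg_mono p (Nat.zero_le i) hi
  rw [pg_zero] at this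
  exact this

private lemma pg_strict (p : PolyT K₁) {i j : ℕ} (hij : i < j) (hj : j ≤ pn p) :
    pg p i < pg p j := by
  have h1 := pg_sub p (i := j) (by omega)
  have h2 := pg_mono p (i := i) (j := j - 1) (by omega) (by omega)
  have h3 := hpos p j (Finset.mem_Icc.mpr ⟨by omega, hj⟩)
  linarith

private noncomputable def rho (p : PolyT K₁) (u v : ℕ) : ℝ :=
  ‖((pg p u - pg p v : ℝ) : AddCircle (pS p))‖

private lemma rho_nonneg (p : PolyT K₁) (u v : ℕ) : 0 ≤ rho p u v := norm_nonneg _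

private lemma rho_self (p : PolyT K₁) (u : ℕ) : rho p u u = 0 := by simp [rho]

private lemma rho_comm (p : PolyT K₁) (u v : ℕ) : rho p u v = rho p v u := by
  rw [rho, rho, ← neg_sub (pg p v) (pg p u), circ_neg]

private lemma rho_tri (p : PolyT K₁) (u v w : ℕ) :
    rho p u w ≤ rho p u v + rho p v w := by
  have key : ((pg p u - pg p w : ℝ) : AddCircle (pS p))
      = ((pg p u - pg p v : ℝ) : AddCircle (pS p))
        + ((pg p v - pg p w : ℝ) : AddCircle (pS p)) := by
    rw [← AddCircle.coe_add]
    congr 1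
    ring
  rw [rho, rho, rho, key]
  exact norm_add_le _ _

end PolyAux
section PolyAux2

variable {K₁ : ℝ}

private lemma rho_pos (p : PolyT K₁) {u v : ℕ} (huv : u ≠ v)
    (hu : u < pn p) (hv : v < pn p) : 0 < rho p u v := by
  have hgn : pg p (pn p - 1) < pS p := by
    have h1 := pg_sub p (i := pn p) (by have := hn3 p; omega)
    have h2 := hpos p (pn p) (Finset.mem_Icc.mpr ⟨by have := hn3 p; omega, le_rfl⟩)
    rw [pg_top] at h1
    linarith
  have hbound : 0 < |pg p u - pg p v| ∧ |pg p u - pg p v| < pS p := by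
    rcases lt_or_gt_of_ne huv with h | h
    · have h1 : pg p u < pg p v := pg_strict p h (by omega)
      have h2 : pg p v ≤ pg p (pn p - 1) := pg_mono p (by omega) (by omega)
      have h3 : 0 ≤ pg p u := pg_nonneg p (by omega)
      rw [abs_of_neg (by linarith)]
      constructor <;> linarith
    · have h1 : pg p v < pg p u := pg_strict p h (by omega)
      have h2 : pg p u ≤ pg p (pn p - 1) := pg_mono p (by omega) (by omega)
      have h3 : 0 ≤ pg p v := pg_nonneg p (by omega)
      rw [abs_of_pos (by linarith)]
      constructor <;> linarith
  have hlow := circ_lower_abs (p := pS p) (x := pg p u - pg p v) hbound.2.le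
  have : 0 < min |pg p u - pg p v| (pS p - |pg p u - pg p v|) := by
    rcases hbound with ⟨h1, h2⟩
    exact lt_min h1 (by linarith)
  exact lt_of_lt_of_le this hlow

private lemma rho_edge_eq (p : PolyT K₁) {i : ℕ} (h1 : 1 ≤ i) (h2 : i ≤ pn p) :
    rho p (i - 1) i = ‖((pa p i : ℝ) : AddCircle (pS p))‖ := by
  have hx : pg p (i - 1) - pg p i = -(pa p i) := by
    have := pg_sub p h1
    linarith
  rw [rho, hx, circ_neg]

private lemma rho_close_eq (p : PolyT K₁) :
    rho p (pn p - 1) 0 = ‖((pa p (pn p) : ℝ) : AddCircle (pS p))‖ := by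
  have hx : pg p (pn p - 1) - pg p 0 = pS p - pa p (pn p) := by
    have h1 := pg_sub p (i := pn p) (by have := hn3 p; omega)
    rw [pg_top] at h1
    rw [pg_zero]
    linarith
  rw [rho, hx, circ_sub_period, circ_neg]

private lemma norm_pa_le (p : PolyT K₁) {i : ℕ} (hi : i ∈ Finset.Icc 1 (pn p)) :
    ‖((pa p i : ℝ) : AddCircle (pS p))‖ ≤ pa p i := by
  refine le_trans (circ_upper _ _) ?_
  rw [abs_of_pos (hpos p i hi)]

private lemma pa_le_norm (p : PolyT K₁) (hK₁ : 1 ≤ K₁) {i : ℕ}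
    (hi : i ∈ Finset.Icc 1 (pn p)) :
    pa p i ≤ K₁ * ‖((pa p i : ℝ) : AddCircle (pS p))‖ := by
  have habs : |pa p i| = pa p i := abs_of_pos (hpos p i hi)
  have hle : |pa p i| ≤ pS p := by rw [habs]; exact pa_le_pS p hi
  have hlow := circ_lower_abs (p := pS p) (x := pa p i) hle
  rw [habs] at hlow
  have hp := hpoly p i hi
  have hap := hpos p i hi
  have key : pa p i ≤ K₁ * min (pa p i) (pS p - pa p i) := by
    rcases le_total (pa p i) (pS p - pa p i) with h | h
    · rw [min_eq_left h]; nlinarith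
    · rw [min_eq_right h]; linarith
  refine le_trans key (mul_le_mul_of_nonneg_left hlow (by linarith))

private def wAux (p : PolyT K₁) (u v : ℕ) : ℝ :=
  if u + 1 = v then pa p v else if u = pn p - 1 ∧ v = 0 then pa p (pn p) else 0

private noncomputable def din (p : PolyT K₁) (u v : ℕ) : ℝ :=
  max (rho p u v) (max (wAux p u v) (wAux p v u))

private lemma wAux_le (p : PolyT K₁) (hK₁ : 1 ≤ K₁) {u v : ℕ}
    (hu : u < pn p) (hv : v < pn p) : wAux p u v ≤ K₁ * rho p u v := by
  have hK0 : (0:ℝ) ≤ K₁ := by linarith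
  unfold wAux
  split_ifs with h1 h2
  · subst h1
    have hmem : u + 1 ∈ Finset.Icc 1 (pn p) := Finset.mem_Icc.mpr ⟨by omega, by omega⟩
    have := pa_le_norm p hK₁ hmem
    rw [← rho_edge_eq p (i := u + 1) (by omega) (by omega)] at this
    simpa using this
  · obtain ⟨rfl, rfl⟩ := h2
    have hmem : pn p ∈ Finset.Icc 1 (pn p) := Finset.mem_Icc.mpr ⟨by have := hn3 p; omega, le_rfl⟩
    have := pa_le_norm p hK₁ hmem
    rw [← rho_close_eq p] at this
    exact this
  · exact mul_nonneg hK0 (rho_nonneg p u v)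

private lemma rho_le_din (p : PolyT K₁) (u v : ℕ) : rho p u v ≤ din p u v :=
  le_max_left _ _

private lemma din_le (p : PolyT K₁) (hK₁ : 1 ≤ K₁) {u v : ℕ}
    (hu : u < pn p) (hv : v < pn p) : din p u v ≤ K₁ * rho p u v := by
  refine max_le (le_mul_of_one_le_left (rho_nonneg p u v) hK₁) (max_le (wAux_le p hK₁ hu hv) ?_)
  rw [rho_comm p u v]
  exact wAux_le p hK₁ hv hu

private lemma din_nonneg (p : PolyT K₁) (u v : ℕ) : 0 ≤ din p u v :=
  le_trans (rho_nonneg p u v) (rho_le_din p u v)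

private lemma din_self (p : PolyT K₁) {u : ℕ} (hu : u < pn p) : din p u u = 0 := by
  have hw : wAux p u u = 0 := by
    unfold wAux
    rw [if_neg (by omega), if_neg (by have := hn3 p; omega)]
  rw [din, hw, rho_self]
  simp

private lemma din_pos (p : PolyT K₁) {u v : ℕ} (huv : u ≠ v)
    (hu : u < pn p) (hv : v < pn p) : 0 < din p u v :=
  lt_of_lt_of_le (rho_pos p huv hu hv) (rho_le_din p u v)

private lemma din_comm (p : PolyT K₁) (u v : ℕ) : din p u v = din p v u := by
  rw [din, din, rho_comm, max_comm (wAux p u v) (wAux p v u)]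

private lemma din_edge (p : PolyT K₁) {i : ℕ} (h1 : 1 ≤ i) (h2 : i ≤ pn p - 1) :
    din p (i - 1) i = pa p i := by
  have hn := hn3 p
  have hw1 : wAux p (i - 1) i = pa p i := by unfold wAux; rw [if_pos (by omega)]
  have hw2 : wAux p i (i - 1) = 0 := by
    unfold wAux
    rw [if_neg (by omega), if_neg (by omega)]
  have hmem : i ∈ Finset.Icc 1 (pn p) := Finset.mem_Icc.mpr ⟨h1, by omega⟩
  have hr : rho p (i - 1) i ≤ pa p i := by
    rw [rho_edge_eq p h1 (by omega)]
    exact norm_pa_le p hmem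
  rw [din, hw1, hw2, max_eq_left (hpos p i hmem).le, max_eq_right hr]

private lemma din_close (p : PolyT K₁) : din p (pn p - 1) 0 = pa p (pn p) := by
  have hn := hn3 p
  have hw1 : wAux p (pn p - 1) 0 = pa p (pn p) := by
    unfold wAux
    rw [if_neg (by omega), if_pos ⟨rfl, rfl⟩]
  have hw2 : wAux p 0 (pn p - 1) = 0 := by
    unfold wAux
    rw [if_neg (by omega), if_neg (by omega)]
  have hmem : pn p ∈ Finset.Icc 1 (pn p) := Finset.mem_Icc.mpr ⟨by omega, le_rfl⟩
  have hr : rho p (pn p - 1) 0 ≤ pa p (pn p) := by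
    rw [rho_close_eq p]
    exact norm_pa_le p hmem
  rw [din, hw1, hw2, max_eq_left (hpos p (pn p) hmem).le, max_eq_right hr]

end PolyAux2

open Classical in
private noncomputable def bigd {K₁ : ℝ} (z w : PolyT K₁ × ℕ) : ℝ :=
  if z.1 = w.1 then din z.1 z.2 w.2 else rho z.1 z.2 0 + rho w.1 w.2 0 + 1

open Classical in
private noncomputable def rhoH {K₁ : ℝ} (z w : PolyT K₁ × ℕ) : ℝ :=
  if z.1 = w.1 then rho z.1 z.2 w.2 else rho z.1 z.2 0 + rho w.1 w.2 0 + 1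

section BigD

variable {K₁ : ℝ}

private lemma bigd_same (p : PolyT K₁) (u v : ℕ) : bigd (p, u) (p, v) = din p u v := by
  simp [bigd]

private lemma bigd_diff {p q : PolyT K₁} (h : p ≠ q) (u v : ℕ) :
    bigd (p, u) (q, v) = rho p u 0 + rho q v 0 + 1 := by
  simp [bigd, h]

private lemma rhoH_same (p : PolyT K₁) (u v : ℕ) : rhoH (p, u) (p, v) = rho p u v := by
  simp [rhoH]

private lemma rhoH_diff {p q : PolyT K₁} (h : p ≠ q) (u v : ℕ) :
    rhoH (p, u) (q, v) = rho p u 0 + rho q v 0 + 1 := by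
  simp [rhoH, h]

private lemma rhoH_self (z : PolyT K₁ × ℕ) : rhoH z z = 0 := by
  obtain ⟨p, u⟩ := z
  rw [rhoH_same, rho_self]

private lemma rhoH_tri (x y z : PolyT K₁ × ℕ) : rhoH x z ≤ rhoH x y + rhoH y z := by
  obtain ⟨p, u⟩ := x
  obtain ⟨q, v⟩ := y
  obtain ⟨r, w⟩ := z
  by_cases hpq : p = q
  · subst hpq
    by_cases hpr : p = r
    · subst hpr
      rw [rhoH_same, rhoH_same, rhoH_same]
      exact rho_tri p u v w
    · rw [rhoH_diff hpr, rhoH_same, rhoH_diff hpr]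
      have h1 := rho_tri p u v 0
      linarith
  · by_cases hqr : q = r
    · subst hqr
      rw [rhoH_diff hpq, rhoH_diff hpq, rhoH_same]
      have h1 := rho_tri q w v 0
      have h2 := rho_comm q v w
      have h3 := rho_comm q w v
      linarith [rho_tri q v 0 0, rho_tri q 0 v w]
    · by_cases hpr : p = r
      · subst hpr
        rw [rhoH_same, rhoH_diff hpq, rhoH_diff (Ne.symm hpq)]
        have h1 := rho_tri p u 0 w
        have h2 := rho_comm p 0 w
        have h3 := rho_nonneg q v 0
        linarith
      · rw [rhoH_diff hpr, rhoH_diff hpq, rhoH_diff hqr]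
        have h3 := rho_nonneg q v 0
        linarith

private lemma rhoH_le_bigd (z w : PolyT K₁ × ℕ) : rhoH z w ≤ bigd z w := by
  obtain ⟨p, u⟩ := z
  obtain ⟨q, v⟩ := w
  by_cases hpq : p = q
  · subst hpq
    rw [rhoH_same, bigd_same]
    exact rho_le_din p u v
  · rw [rhoH_diff hpq, bigd_diff hpq]

private lemma bigd_le_rhoH (hK₁ : 1 ≤ K₁) {z w : PolyT K₁ × ℕ}
    (hz : z.2 < pn z.1) (hw : w.2 < pn w.1) : bigd z w ≤ K₁ * rhoH z w := by
  obtain ⟨p, u⟩ := z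
  obtain ⟨q, v⟩ := w
  by_cases hpq : p = q
  · subst hpq
    rw [rhoH_same, bigd_same]
    exact din_le p hK₁ hz hw
  · rw [rhoH_diff hpq, bigd_diff hpq]
    have h1 := rho_nonneg p u 0
    have h2 := rho_nonneg q v 0
    nlinarith

end BigD
private def XX (K₁ : ℝ) : Set (PolyT K₁ × ℕ) := {z | z.2 < pn z.1}

section SpaceLemmas

variable {K₁ : ℝ}

private lemma mem_XX {z : PolyT K₁ × ℕ} : z ∈ XX K₁ ↔ z.2 < pn z.1 := Iff.rfl

private lemma XX_semi : IsSemimetricOn (XX K₁) (bigd (K₁ := K₁)) := by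
  refine ⟨?_, ?_, ?_⟩
  · rintro ⟨p, u⟩ hz ⟨q, v⟩ hw
    by_cases hpq : p = q
    · subst hpq
      rw [bigd_same]
      exact din_nonneg p u v
    · rw [bigd_diff hpq]
      have h1 := rho_nonneg p u 0
      have h2 := rho_nonneg q v 0
      linarith
  · rintro ⟨p, u⟩ hz ⟨q, v⟩ hw
    by_cases hpq : p = q
    · subst hpq
      rw [bigd_same]
      constructor
      · intro h
        by_contra hne
        have huv : u ≠ v := by
          intro h'
          exact hne (by rw [h'])
        exact absurd h (ne_of_gt (din_pos p huv hz hw))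
      · intro h
        have huv : u = v := (Prod.ext_iff.mp h).2
        subst huv
        exact din_self p hz
    · rw [bigd_diff hpq]
      have h1 := rho_nonneg p u 0
      have h2 := rho_nonneg q v 0
      constructor
      · intro h; exfalso; linarith
      · intro h
        exact absurd ((Prod.ext_iff.mp h).1) hpq
  · rintro ⟨p, u⟩ hz ⟨q, v⟩ hw
    by_cases hpq : p = q
    · subst hpq
      rw [bigd_same, bigd_same, din_comm]
    · rw [bigd_diff hpq, bigd_diff (Ne.symm hpq)]
      ring

private lemma XX_rpi (hK₁ : 1 ≤ K₁) : SatisfiesRPI (XX K₁) (bigd (K₁ := K₁)) K₁ := by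
  intro n x hx
  have h1 : bigd (x 0) (x n) ≤ K₁ * rhoH (x 0) (x n) :=
    bigd_le_rhoH hK₁ (hx 0 (Nat.zero_le n)) (hx n le_rfl)
  have h2 : rhoH (x 0) (x n) ≤ ∑ i ∈ Finset.range n, rhoH (x i) (x (i + 1)) :=
    chainBound rhoH_self rhoH_tri n x
  have h3 : ∑ i ∈ Finset.range n, rhoH (x i) (x (i + 1))
      ≤ ∑ i ∈ Finset.range n, bigd (x i) (x (i + 1)) :=
    Finset.sum_le_sum fun i _ => rhoH_le_bigd _ _
  calc bigd (x 0) (x n) ≤ K₁ * rhoH (x 0) (x n) := h1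
    _ ≤ K₁ * ∑ i ∈ Finset.range n, bigd (x i) (x (i + 1)) := by
        have hK0 : (0:ℝ) ≤ K₁ := by linarith
        have := le_trans h2 h3
        exact mul_le_mul_of_nonneg_left this hK0

private noncomputable def basePoly (K₁ : ℝ) (hK₁ : 1 ≤ K₁) : PolyT K₁ := by
  refine ⟨(3, fun _ => 1), le_rfl, fun i _ => one_pos, fun j hj => ?_⟩
  have h3 : ∑ i ∈ Finset.Icc 1 3, (1:ℝ) = 3 := by
    rw [Finset.sum_const, Nat.card_Icc]
    norm_num
  rw [h3]
  show (1 + K₁) * 1 ≤ K₁ * 3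
  linarith

private lemma XX_nonempty (hK₁ : 1 ≤ K₁) : (XX K₁).Nonempty :=
  ⟨(basePoly K₁ hK₁, 0), by
    rw [mem_XX]
    show 0 < 3
    norm_num⟩

private lemma cycle_key (hK₁ : 1 ≤ K₁) {f : ℝ → ℝ} {K' : ℝ} (hK' : 0 ≤ K')
    (hsym : ∀ z ∈ XX K₁, ∀ w ∈ XX K₁, f (bigd z w) = f (bigd w z))
    (hrpi' : SatisfiesRPI (XX K₁) (fun z w => f (bigd z w)) K')
    (q : PolyT K₁) {k : ℕ} (hk : k ∈ Finset.Icc 1 (pn q)) :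
    f (pa q k) ≤ K' * ∑ i ∈ (Finset.Icc 1 (pn q)).erase k, f (pa q i) := by
  have hn := hn3 q
  set x : ℕ → PolyT K₁ × ℕ := fun i => (q, i) with hxdef
  have hxX : ∀ i ≤ pn q - 1, x i ∈ XX K₁ := by
    intro i hi
    rw [mem_XX]
    show i < pn q
    omega
  have hedge : ∀ i : ℕ, i + 2 ≤ pn q → f (bigd (x i) (x (i + 1))) = f (pa q (i + 1)) := by
    intro i hi
    have hde := din_edge q (i := i + 1) (by omega) (by omega)
    simp only [Nat.add_sub_cancel] at hde
    rw [hxdef]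
    show f (bigd (q, i) (q, i + 1)) = _
    rw [bigd_same, hde]
  have hclose : f (bigd (x 0) (x (pn q - 1))) = f (pa q (pn q)) := by
    rw [hxdef]
    show f (bigd (q, 0) (q, pn q - 1)) = _
    rw [bigd_same, din_comm, din_close]
  rcases Finset.mem_Icc.mp hk with ⟨hk1, hk2⟩
  rcases eq_or_lt_of_le hk2 with hkn | hkn
  · -- k = pn q : the closing edge
    subst hkn
    have key : f (bigd (x 0) (x (pn q - 1)))
        ≤ K' * ∑ i ∈ Finset.range (pn q - 1), f (bigd (x i) (x (i + 1))) :=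
      hrpi' (pn q - 1) x hxX
    rw [hclose] at key
    have hsum : ∑ i ∈ Finset.range (pn q - 1), f (bigd (x i) (x (i + 1)))
        = ∑ i ∈ (Finset.Icc 1 (pn q)).erase (pn q), f (pa q i) := by
      have he : (Finset.Icc 1 (pn q)).erase (pn q) = Finset.Ico 1 (pn q) := by
        ext i
        simp only [Finset.mem_erase, Finset.mem_Icc, Finset.mem_Ico]
        omega
      rw [he, Finset.sum_Ico_eq_sum_range]
      have hlen : pn q - 1 = pn q - 1 := rfl
      refine Finset.sum_congr rfl ?_
      intro i hi
      rw [Finset.mem_range] at hi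
      rw [hedge i (by omega), Nat.add_comm 1 i]
    rw [hsum] at key
    exact key
  · -- 1 ≤ k < pn q : a chain edge
    have key : f (bigd (x (k - 1)) (x k))
        ≤ K' * (∑ i ∈ Finset.range (k - 1), f (bigd (x i) (x (i + 1)))
            + f (bigd (x 0) (x (pn q - 1)))
            + ∑ i ∈ Finset.Ico k (pn q - 1), f (bigd (x i) (x (i + 1)))) :=
      cyclePath (X := XX K₁) (D := fun z w => f (bigd z w)) hsym hrpi'
        (pn q - 1) x hxX k hk1 (by omega)
    have hL : f (bigd (x (k - 1)) (x k)) = f (pa q k) := by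
      have hde := din_edge q (i := k) (by omega) (by omega)
      rw [hxdef]
      show f (bigd (q, k - 1) (q, k)) = _
      rw [bigd_same, hde]
    have hA : ∑ i ∈ Finset.range (k - 1), f (bigd (x i) (x (i + 1)))
        = ∑ i ∈ Finset.Ico 1 k, f (pa q i) := by
      rw [Finset.sum_Ico_eq_sum_range]
      have : k - 1 = k - 1 := rfl
      refine Finset.sum_congr rfl ?_
      intro i hi
      rw [Finset.mem_range] at hi
      rw [hedge i (by omega), Nat.add_comm 1 i]
    have hB : ∑ i ∈ Finset.Ico k (pn q - 1), f (bigd (x i) (x (i + 1)))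
        = ∑ i ∈ Finset.Ico (k + 1) (pn q), f (pa q i) := by
      rw [Finset.sum_Ico_eq_sum_range, Finset.sum_Ico_eq_sum_range]
      have hlen : pn q - (k + 1) = pn q - 1 - k := by omega
      rw [hlen]
      refine Finset.sum_congr rfl ?_
      intro i hi
      rw [Finset.mem_range] at hi
      rw [hedge (k + i) (by omega), show k + 1 + i = k + i + 1 from by omega]
    have hsplit : (Finset.Icc 1 (pn q)).erase k
        = Finset.Ico 1 k ∪ Finset.Ico (k + 1) (pn q + 1) := by
      ext i
      simp only [Finset.mem_erase, Finset.mem_Icc, Finset.mem_Ico, Finset.mem_union]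
      omega
    have hdisj : Disjoint (Finset.Ico 1 k) (Finset.Ico (k + 1) (pn q + 1)) := by
      rw [Finset.disjoint_left]
      intro i hi1 hi2
      rw [Finset.mem_Ico] at hi1 hi2
      omega
    have htarget : ∑ i ∈ (Finset.Icc 1 (pn q)).erase k, f (pa q i)
        = ∑ i ∈ Finset.Ico 1 k, f (pa q i)
          + (∑ i ∈ Finset.Ico (k + 1) (pn q), f (pa q i) + f (pa q (pn q))) := by
      rw [hsplit, Finset.sum_union hdisj, Finset.sum_Ico_succ_top (by omega)]
    rw [hL, hA, hB, hclose] at key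
    rw [htarget]
    calc f (pa q k)
        ≤ K' * (∑ i ∈ Finset.Ico 1 k, f (pa q i) + f (pa q (pn q))
            + ∑ i ∈ Finset.Ico (k + 1) (pn q), f (pa q i)) := key
      _ = K' * (∑ i ∈ Finset.Ico 1 k, f (pa q i)
            + (∑ i ∈ Finset.Ico (k + 1) (pn q), f (pa q i) + f (pa q (pn q)))) := by ring

end SpaceLemmas
/-- Characterization of (P)-preserving mappings via relaxed
polygons. -/
theorem P_preserving_characterization (f : ℝ → ℝ)
    (hf : ∀ x : ℝ, 0 ≤ x → 0 ≤ f x)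
    (hamen : ∀ x : ℝ, 0 ≤ x → (f x = 0 ↔ x = 0)) :
    (∀ (α : Type) (X : Set α) (d : α → α → ℝ), X.Nonempty →
        IsSemimetricOn X d → (∃ K : ℝ, 1 ≤ K ∧ SatisfiesRPI X d K) →
          IsSemimetricOn X (fun x y => f (d x y)) ∧
          ∃ K' : ℝ, 1 ≤ K' ∧ SatisfiesRPI X (fun x y => f (d x y)) K') ↔
    (∀ K₁ : ℝ, 1 ≤ K₁ → ∃ K₂ : ℝ, 1 ≤ K₂ ∧
      ∀ (n : ℕ) (a : ℕ → ℝ), (∀ i ∈ Finset.Icc 1 n, 0 ≤ a i) →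
        (∀ j ∈ Finset.Icc 1 n, (1 + K₁) * a j ≤ K₁ * ∑ i ∈ Finset.Icc 1 n, a i) →
        (∀ j ∈ Finset.Icc 1 n, (1 + K₂) * f (a j) ≤ K₂ * ∑ i ∈ Finset.Icc 1 n, f (a i))) := by
  have hf0 : f 0 = 0 := (hamen 0 le_rfl).mpr rfl
  constructor
  · intro hL K₁ hK₁
    classical
    obtain ⟨hsemi', K', hK', hrpi'⟩ := hL (PolyT K₁ × ℕ) (XX K₁) bigd (XX_nonempty hK₁)
      XX_semi ⟨K₁, hK₁, XX_rpi hK₁⟩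
    obtain ⟨hpos', heq', hsym'⟩ := hsemi'
    have hK'0 : (0:ℝ) ≤ K' := by linarith
    refine ⟨1 + 2 * K', by linarith, ?_⟩
    intro n a ha hpolyA j hj
    have hfa : ∀ i ∈ Finset.Icc 1 n, 0 ≤ f (a i) := fun i hi => hf _ (ha i hi)
    have hsum_split : ∑ i ∈ Finset.Icc 1 n, f (a i)
        = f (a j) + ∑ i ∈ (Finset.Icc 1 n).erase j, f (a i) :=
      (Finset.add_sum_erase _ _ hj).symm
    have herase_nonneg : 0 ≤ ∑ i ∈ (Finset.Icc 1 n).erase j, f (a i) :=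
      Finset.sum_nonneg fun i hi => hfa i (Finset.mem_of_mem_erase hi)
    have hfaj : 0 ≤ f (a j) := hfa j hj
    suffices hred : f (a j) ≤ (1 + 2 * K') * ∑ i ∈ (Finset.Icc 1 n).erase j, f (a i) by
      rw [hsum_split]
      nlinarith
    by_cases haj : a j = 0
    · rw [haj, hf0]
      exact mul_nonneg (by linarith) herase_nonneg
    · have haj' : 0 < a j := lt_of_le_of_ne (ha j hj) (Ne.symm haj)
      set T := (Finset.Icc 1 n).filter (fun i => 0 < a i) with hTdef
      have hjT : j ∈ T := Finset.mem_filter.mpr ⟨hj, haj'⟩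
      have hTsub : T ⊆ Finset.Icc 1 n := Finset.filter_subset _ _
      have hTpos : ∀ i ∈ T, 0 < a i := fun i hi => (Finset.mem_filter.mp hi).2
      have hsum_aT : ∑ i ∈ T, a i = ∑ i ∈ Finset.Icc 1 n, a i :=
        Finset.sum_filter_of_ne fun i hi hne => lt_of_le_of_ne (ha i hi) (Ne.symm hne)
      have hTe_nonneg : 0 ≤ ∑ i ∈ T.erase j, f (a i) :=
        Finset.sum_nonneg fun i hi => hfa i (hTsub (Finset.mem_of_mem_erase hi))
      suffices hred2 : f (a j) ≤ 2 * K' * ∑ i ∈ T.erase j, f (a i) by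
        have hmono : ∑ i ∈ T.erase j, f (a i) ≤ ∑ i ∈ (Finset.Icc 1 n).erase j, f (a i) := by
          refine Finset.sum_le_sum_of_subset_of_nonneg (Finset.erase_subset_erase _ hTsub) ?_
          intro i hi _
          exact hfa i (Finset.mem_of_mem_erase hi)
        nlinarith
      have hTcard1 : 1 ≤ T.card := Finset.card_pos.mpr ⟨j, hjT⟩
      rcases Nat.lt_or_ge T.card 2 with ht1 | ht2
      · -- |T| = 1 : contradiction with positivity
        exfalso
        have hT1 : T.card = 1 := by omega
        obtain ⟨x₀, hx₀⟩ := Finset.card_eq_one.mp hT1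
        have hjx : j = x₀ := by
          have h' := hjT
          rw [hx₀, Finset.mem_singleton] at h'
          exact h'
        have hsum1 : ∑ i ∈ T, a i = a j := by rw [hx₀, Finset.sum_singleton, ← hjx]
        have hp := hpolyA j hj
        rw [← hsum_aT, hsum1] at hp
        nlinarith
      rcases Nat.lt_or_ge T.card 3 with ht2' | ht3
      · -- |T| = 2 : use an auxiliary triangle (a j, a j', a j')
        have hT2 : T.card = 2 := by omega
        have hTe1 : (T.erase j).card = 1 := by
          rw [Finset.card_erase_of_mem hjT, hT2]
        obtain ⟨j', hj'⟩ := Finset.card_eq_one.mp hTe1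
        have hj'T : j' ∈ T.erase j := by rw [hj']; exact Finset.mem_singleton_self j'
        have hj'mem : j' ∈ T := Finset.mem_of_mem_erase hj'T
        have haj2 : 0 < a j' := hTpos j' hj'mem
        have hsum2 : ∑ i ∈ T, a i = a j + a j' := by
          rw [← Finset.add_sum_erase _ _ hjT, hj', Finset.sum_singleton]
        have hp := hpolyA j hj
        rw [← hsum_aT, hsum2] at hp
        have hkey : a j ≤ K₁ * a j' := by nlinarith
        set b : ℕ → ℝ := fun i => if i = 1 then a j else a j' with hbdef
        have hb1 : b 1 = a j := by simp [hbdef]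
        have hb2 : b 2 = a j' := by simp [hbdef]
        have hb3 : b 3 = a j' := by simp [hbdef]
        have hsum3 : ∀ g : ℕ → ℝ, ∑ i ∈ Finset.Icc 1 3, g i = g 1 + g 2 + g 3 := by
          intro g
          have h123 : Finset.Icc 1 3 = {1, 2, 3} := by
            ext i
            simp only [Finset.mem_Icc, Finset.mem_insert, Finset.mem_singleton]
            omega
          rw [h123, Finset.sum_insert (by decide), Finset.sum_insert (by decide),
            Finset.sum_singleton]
          ring
        have hqpos : ∀ i ∈ Finset.Icc 1 3, 0 < b i := by
          intro i _
          simp only [hbdef]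
          split
          · exact haj'
          · exact haj2
        have hqpoly : ∀ k ∈ Finset.Icc 1 3,
            (1 + K₁) * b k ≤ K₁ * ∑ i ∈ Finset.Icc 1 3, b i := by
          intro k _
          rw [hsum3 b, hb1, hb2, hb3]
          by_cases hk1 : k = 1
          · subst hk1
            rw [hb1]
            nlinarith
          · have hbk : b k = a j' := by simp [hbdef, hk1]
            rw [hbk]
            nlinarith
        have hq : PolyPred K₁ (3, b) := ⟨le_rfl, hqpos, hqpoly⟩
        set q : PolyT K₁ := ⟨(3, b), hq⟩ with hqdef
        have hk₀mem : (1 : ℕ) ∈ Finset.Icc 1 (pn q) := by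
          show (1 : ℕ) ∈ Finset.Icc 1 3
          rw [Finset.mem_Icc]
          omega
        have hck : f (b 1) ≤ K' * ∑ i ∈ (Finset.Icc 1 3).erase 1, f (b i) :=
          cycle_key hK₁ hK'0 hsym' hrpi' q hk₀mem
        have herase23 : (Finset.Icc 1 3).erase 1 = ({2, 3} : Finset ℕ) := by
          ext i
          simp only [Finset.mem_erase, Finset.mem_Icc, Finset.mem_insert, Finset.mem_singleton]
          omega
        rw [herase23, Finset.sum_insert (by decide), Finset.sum_singleton, hb1, hb2, hb3] at hck
        have hTe_sum : ∑ i ∈ T.erase j, f (a i) = f (a j') := by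
          rw [hj', Finset.sum_singleton]
        rw [hTe_sum]
        have hfj' : 0 ≤ f (a j') := hf _ haj2.le
        nlinarith
      · -- |T| ≥ 3 : use the cycle built on T itself
        set e := T.orderIsoOfFin rfl with hedef
        set b : ℕ → ℝ := fun k => if h : k - 1 < T.card then a ↑(e ⟨k - 1, h⟩) else 1 with hbdef
        have hreidx : ∀ G : ℝ → ℝ,
            ∑ k ∈ Finset.Icc 1 T.card, G (b k) = ∑ i ∈ T, G (a i) := by
          intro G
          rw [← Finset.Ico_add_one_right_eq_Icc 1 T.card, Finset.sum_Ico_eq_sum_range, Nat.add_sub_cancel]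
          rw [← Fin.sum_univ_eq_sum_range (fun i => G (b (1 + i))) T.card]
          rw [← Finset.sum_coe_sort T (fun i => G (a i))]
          rw [← Equiv.sum_comp e.toEquiv (fun x => G (a ↑x))]
          refine Finset.sum_congr rfl ?_
          intro i _
          have hlt : 1 + (i : ℕ) - 1 < T.card := by
            have := i.isLt
            omega
          have hb : b (1 + (i : ℕ)) = a ↑(e ⟨1 + (i : ℕ) - 1, hlt⟩) := by
            simp only [hbdef]
            rw [dif_pos hlt]
          have hfin : (⟨1 + (i : ℕ) - 1, hlt⟩ : Fin T.card) = i := by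
            apply Fin.ext
            show 1 + (i : ℕ) - 1 = (i : ℕ)
            omega
          rw [hb, hfin]
          rfl
        have hqpos : ∀ k ∈ Finset.Icc 1 T.card, 0 < b k := by
          intro k hk
          rw [Finset.mem_Icc] at hk
          have hlt : k - 1 < T.card := by omega
          simp only [hbdef]
          rw [dif_pos hlt]
          exact hTpos _ (e ⟨k - 1, hlt⟩).2
        have hsum_bT : ∑ k ∈ Finset.Icc 1 T.card, b k = ∑ i ∈ T, a i := by
          simpa using hreidx (fun x => x)
        have hqpoly : ∀ k ∈ Finset.Icc 1 T.card,
            (1 + K₁) * b k ≤ K₁ * ∑ i ∈ Finset.Icc 1 T.card, b i := by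
          intro k hk
          rw [Finset.mem_Icc] at hk
          have hlt : k - 1 < T.card := by omega
          have hmem : ↑(e ⟨k - 1, hlt⟩) ∈ T := (e ⟨k - 1, hlt⟩).2
          have hb : b k = a ↑(e ⟨k - 1, hlt⟩) := by
            simp only [hbdef]
            rw [dif_pos hlt]
          rw [hsum_bT, hsum_aT, hb]
          exact hpolyA _ (hTsub hmem)
        have hq : PolyPred K₁ (T.card, b) := ⟨ht3, hqpos, hqpoly⟩
        set q : PolyT K₁ := ⟨(T.card, b), hq⟩ with hqdef
        set k₀ : ℕ := ((e.symm ⟨j, hjT⟩ : Fin T.card) : ℕ) + 1 with hk₀def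
        have hk₀lt : k₀ - 1 < T.card := by
          simp only [hk₀def, Nat.add_sub_cancel]
          exact (e.symm ⟨j, hjT⟩).isLt
        have hk₀mem : k₀ ∈ Finset.Icc 1 (pn q) := by
          show k₀ ∈ Finset.Icc 1 T.card
          rw [Finset.mem_Icc]
          have := (e.symm ⟨j, hjT⟩).isLt
          omega
        have hbk₀ : b k₀ = a j := by
          simp only [hbdef]
          rw [dif_pos hk₀lt]
          have hfin : (⟨k₀ - 1, hk₀lt⟩ : Fin T.card) = e.symm ⟨j, hjT⟩ := by
            apply Fin.ext
            show k₀ - 1 = ((e.symm ⟨j, hjT⟩ : Fin T.card) : ℕ)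
            simp only [hk₀def, Nat.add_sub_cancel]
          rw [hfin, OrderIso.apply_symm_apply]
        have hck : f (b k₀) ≤ K' * ∑ i ∈ (Finset.Icc 1 T.card).erase k₀, f (b i) :=
          cycle_key hK₁ hK'0 hsym' hrpi' q hk₀mem
        have herase_eq : ∑ i ∈ (Finset.Icc 1 T.card).erase k₀, f (b i)
            = ∑ i ∈ T.erase j, f (a i) := by
          have hk₀mem' : k₀ ∈ Finset.Icc 1 T.card := hk₀mem
          rw [Finset.sum_erase_eq_sub hk₀mem', Finset.sum_erase_eq_sub hjT, hreidx f, hbk₀]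
        rw [herase_eq, hbk₀] at hck
        nlinarith
  · intro hR α X d hXne hsemi hrpiE
    obtain ⟨K, hK, hrpi⟩ := hrpiE
    obtain ⟨hpos, heq, hsym⟩ := hsemi
    refine ⟨⟨fun x hx y hy => hf _ (hpos x hx y hy),
      fun x hx y hy => by show f (d x y) = 0 ↔ x = y; rw [hamen _ (hpos x hx y hy)]; exact heq x hx y hy,
      fun x hx y hy => by show f (d x y) = f (d y x); rw [hsym x hx y hy]⟩, ?_⟩
    obtain ⟨K₂, hK₂, hpolyR⟩ := hR K hK
    refine ⟨K₂, hK₂, ?_⟩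
    intro n x hx
    rcases Nat.eq_zero_or_pos n with rfl | hn
    · show f (d (x 0) (x 0)) ≤ K₂ * ∑ i ∈ Finset.range 0, f (d (x i) (x (i + 1)))
      rw [Finset.range_zero, Finset.sum_empty, mul_zero,
        (heq _ (hx 0 le_rfl) _ (hx 0 le_rfl)).mpr rfl, hf0]
    · set a : ℕ → ℝ := fun i => if i = n + 1 then d (x 0) (x n) else d (x (i - 1)) (x i)
        with hadef
      have ha_nonneg : ∀ i ∈ Finset.Icc 1 (n + 1), 0 ≤ a i := by
        intro i hi
        rw [Finset.mem_Icc] at hi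
        simp only [hadef]
        split
        · exact hpos _ (hx 0 (by omega)) _ (hx n le_rfl)
        · next h => exact hpos _ (hx (i - 1) (by omega)) _ (hx i (by omega))
      have hSE : ∑ i ∈ Finset.Icc 1 n, a i = ∑ i ∈ Finset.range n, d (x i) (x (i + 1)) := by
        rw [show Finset.Icc 1 n = Finset.Ico 1 (n + 1) from (Finset.Ico_add_one_right_eq_Icc 1 n).symm,
          Finset.sum_Ico_eq_sum_range, Nat.add_sub_cancel]
        refine Finset.sum_congr rfl ?_
        intro i hi
        rw [Finset.mem_range] at hi
        simp only [hadef]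
        rw [if_neg (by omega)]
        have e1 : 1 + i - 1 = i := by omega
        have e2 : 1 + i = i + 1 := by omega
        rw [e1, e2]
      have htot : ∑ i ∈ Finset.Icc 1 (n + 1), a i
          = ∑ i ∈ Finset.range n, d (x i) (x (i + 1)) + d (x 0) (x n) := by
        rw [Finset.sum_Icc_succ_top (by omega), hSE]
        simp only [hadef, if_pos rfl]
      have hpolyhyp : ∀ j ∈ Finset.Icc 1 (n + 1),
          (1 + K) * a j ≤ K * ∑ i ∈ Finset.Icc 1 (n + 1), a i := by
        intro j hj
        rw [Finset.mem_Icc] at hj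
        rw [htot]
        by_cases hjn : j = n + 1
        · subst hjn
          have han1 : a (n + 1) = d (x 0) (x n) := by simp [hadef]
          rw [han1]
          have hr := hrpi n x hx
          linarith
        · have hj1 : 1 ≤ j := hj.1
          have hjn' : j ≤ n := by omega
          have key := cyclePath hsym hrpi n x hx j hj1 hjn'
          have haj : a j = d (x (j - 1)) (x j) := by simp only [hadef]; rw [if_neg hjn]
          have h1 : ∑ i ∈ Finset.range j, d (x i) (x (i + 1))
              = ∑ i ∈ Finset.range (j - 1), d (x i) (x (i + 1)) + d (x (j - 1)) (x j) := by
            obtain ⟨j', rfl⟩ : ∃ j', j = j' + 1 := ⟨j - 1, by omega⟩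
            rw [Finset.sum_range_succ]
            simp only [Nat.add_sub_cancel]
          have h2 : ∑ i ∈ Finset.range n, d (x i) (x (i + 1))
              = ∑ i ∈ Finset.range j, d (x i) (x (i + 1))
                + ∑ i ∈ Finset.Ico j n, d (x i) (x (i + 1)) := by
            rw [Finset.range_eq_Ico, Finset.range_eq_Ico]
            exact (Finset.sum_Ico_consecutive _ (Nat.zero_le j) hjn').symm
          rw [haj, h2, h1]
          linarith
      have happ := hpolyR (n + 1) a ha_nonneg hpolyhyp (n + 1)
        (Finset.mem_Icc.mpr ⟨by omega, le_rfl⟩)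
      have hfa_tot : ∑ i ∈ Finset.Icc 1 (n + 1), f (a i)
          = ∑ i ∈ Finset.range n, f (d (x i) (x (i + 1))) + f (d (x 0) (x n)) := by
        rw [Finset.sum_Icc_succ_top (by omega)]
        congr 1
        · rw [show Finset.Icc 1 n = Finset.Ico 1 (n + 1) from (Finset.Ico_add_one_right_eq_Icc 1 n).symm,
            Finset.sum_Ico_eq_sum_range, Nat.add_sub_cancel]
          refine Finset.sum_congr rfl ?_
          intro i hi
          rw [Finset.mem_range] at hi
          simp only [hadef]
          rw [if_neg (by omega)]
          have e1 : 1 + i - 1 = i := by omega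
          have e2 : 1 + i = i + 1 := by omega
          rw [e1, e2]
        · simp [hadef]
      have han1 : a (n + 1) = d (x 0) (x n) := by simp [hadef]
      rw [han1, hfa_tot] at happ
      show f (d (x 0) (x n)) ≤ K₂ * ∑ i ∈ Finset.range n, f (d (x i) (x (i + 1)))
      have hfnn : 0 ≤ f (d (x 0) (x n)) := hf _ (hpos _ (hx 0 (by omega)) _ (hx n le_rfl))
      linarith
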